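/- Let 𝒦 be a family of closed disks in ℝ², each with center lying in a closed half-plane ℓ⁺ bounded by a line ℓ, and let L = ⋂ 𝒦 be their intersection. Then the reflection across ℓ of L \ ℓ⁺ is contained in L ∩ ℓ⁺. -/

import Mathlib

open Metric

/-- Folding an intersection of disks whose centers all lie in a closed half-plane
`ℓ⁺ = {x | ⟪x,n⟫ ≤ c}` (with `‖n‖ = 1`): the reflection across the boundary line of
`L \ ℓ⁺` is contained in `L ∩ ℓ⁺`, where `L` is the intersection of the disks. -/
theorem disk_intersection_fold {ι : Type*} [Nonempty ι]
    (o : ι → EuclideanSpace ℝ (Fin 2)) (rad : ι → ℝ)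
    (n : EuclideanSpace ℝ (Fin 2)) (c : ℝ) (hn : ‖n‖ = 1)
    (ho : ∀ i, (inner ℝ (o i) n : ℝ) ≤ c) :
    let L : Set (EuclideanSpace ℝ (Fin 2)) := ⋂ i, closedBall (o i) (rad i)
    ∀ x ∈ L \ {x : EuclideanSpace ℝ (Fin 2) | (inner ℝ x n : ℝ) ≤ c},
      x - (2 * ((inner ℝ x n : ℝ) - c)) • n
        ∈ L ∩ {x : EuclideanSpace ℝ (Fin 2) | (inner ℝ x n : ℝ) ≤ c} := by
  intro L x hx
  obtain ⟨hxL, hxc⟩ := hx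
  simp only [Set.mem_setOf_eq, not_le] at hxc
  set t : ℝ := (inner ℝ x n : ℝ) - c with ht
  have ht0 : 0 < t := by simp only [ht]; linarith
  have hnn : (inner ℝ n n : ℝ) = 1 := by
    rw [real_inner_self_eq_norm_sq, hn]; norm_num
  constructor
  · refine Set.mem_iInter.2 fun i => ?_
    have hxi := Set.mem_iInter.1 hxL i
    rw [mem_closedBall, dist_eq_norm] at hxi ⊢
    have hre : x - (2 * t) • n - o i = (x - o i) - (2 * t) • n := by abel
    rw [hre]
    have hexp : ‖(x - o i) - (2 * t) • n‖ ^ 2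
        = ‖x - o i‖ ^ 2 - 2 * ((2 * t) * (inner ℝ (x - o i) n : ℝ))
          + (2 * t) ^ 2 := by
      rw [norm_sub_sq_real, real_inner_smul_right, norm_smul]
      simp [hn, mul_pow, abs_mul]
    have hin : (inner ℝ (x - o i) n : ℝ) ≥ t := by
      rw [inner_sub_left]
      have := ho i
      simp only [ht]
      linarith
    have hkey : ‖(x - o i) - (2 * t) • n‖ ^ 2 ≤ ‖x - o i‖ ^ 2 := by
      rw [hexp]; nlinarith
    nlinarith [norm_nonneg ((x - o i) - (2 * t) • n), norm_nonneg (x - o i)]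
  · show (inner ℝ (x - (2 * t) • n) n : ℝ) ≤ c
    rw [inner_sub_left, real_inner_smul_left, hnn]
    simp only [ht]
    linarith
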